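/- Let X be a T₃ space such that the hyperspace CL(X) with the Vietoris topology is developable (or more generally has a Gδ-diagonal and X is countably compact). If CL(X) is perfect and X is countably compact, then X is compact and metrizable. -/

import Mathlib

open Set TopologicalSpace

/-- The hyperspace of nonempty closed subsets of `X`. -/
def CL (X : Type*) [TopologicalSpace X] : Type _ :=
  {A : Set X // A.Nonempty ∧ IsClosed A}

/-- The Vietoris topology on `CL X`. -/
instance CL.instTopologicalSpace (X : Type*) [TopologicalSpace X] :
    TopologicalSpace (CL X) :=
  .generateFrom
    ({S | ∃ U : Set X, IsOpen U ∧ S = {K : CL X | K.1 ⊆ U}} ∪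
     {S | ∃ U : Set X, IsOpen U ∧ S = {K : CL X | (K.1 ∩ U).Nonempty}})


namespace CLProof

open Filter Topology Uniformity


variable {X : Type*} [TopologicalSpace X]

lemma isOpen_lower (U : Set X) (hU : IsOpen U) :
    IsOpen {K : CL X | (K.1 ∩ U).Nonempty} :=
  isOpen_generateFrom_of_mem (Or.inr ⟨U, hU, rfl⟩)

lemma isOpen_upper (U : Set X) (hU : IsOpen U) :
    IsOpen {K : CL X | K.1 ⊆ U} :=
  isOpen_generateFrom_of_mem (Or.inl ⟨U, hU, rfl⟩)

/-- The map `(x, y) ↦ {x, y}`. -/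
noncomputable def pairCL [T1Space X] (p : X × X) : CL X :=
  ⟨{p.1, p.2}, ⟨p.1, by simp⟩, (Set.toFinite _).isClosed⟩

lemma continuous_pairCL [T1Space X] : Continuous (pairCL (X := X)) := by
  apply continuous_generateFrom_iff.mpr
  rintro s (⟨U, hU, rfl⟩ | ⟨U, hU, rfl⟩)
  · have : pairCL (X := X) ⁻¹' {K : CL X | K.1 ⊆ U} = U ×ˢ U := by
      ext p
      simp [pairCL, Set.insert_subset_iff, Set.mem_prod]
    rw [this]
    exact hU.prod hU
  · have : pairCL (X := X) ⁻¹' {K : CL X | (K.1 ∩ U).Nonempty} =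
        (U ×ˢ (univ : Set X)) ∪ ((univ : Set X) ×ˢ U) := by
      ext p
      constructor
      · rintro ⟨z, hz1, hz2⟩
        rcases hz1 with rfl | rfl
        · exact Or.inl ⟨hz2, trivial⟩
        · exact Or.inr ⟨trivial, hz2⟩
      · rintro (⟨h, -⟩ | ⟨-, h⟩)
        · exact ⟨p.1, Or.inl rfl, h⟩
        · exact ⟨p.2, Or.inr rfl, h⟩
    rw [this]
    exact (hU.prod isOpen_univ).union (isOpen_univ.prod hU)

/-- The set of subsingleton members of `CL X` is closed. -/
lemma isClosed_subsingletons [T2Space X] :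
    IsClosed {K : CL X | K.1.Subsingleton} := by
  rw [← isOpen_compl_iff]
  rw [isOpen_iff_forall_mem_open]
  intro K hK
  rw [mem_compl_iff, mem_setOf_eq, Set.not_subsingleton_iff] at hK
  obtain ⟨x, hx, y, hy, hxy⟩ := hK
  obtain ⟨U, V, hUo, hVo, hxU, hyV, hUV⟩ := t2_separation hxy
  refine ⟨{L : CL X | (L.1 ∩ U).Nonempty} ∩ {L : CL X | (L.1 ∩ V).Nonempty}, ?_, ?_, ?_⟩
  · rintro L ⟨⟨a, haL, haU⟩, ⟨b, hbL, hbV⟩⟩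
    intro hsub
    have : a = b := hsub haL hbL
    subst this
    exact (Set.disjoint_iff.mp hUV ⟨haU, hbV⟩)
  · exact (isOpen_lower U hUo).inter (isOpen_lower V hVo)
  · exact ⟨⟨x, hx, hxU⟩, ⟨y, hy, hyV⟩⟩

lemma exists_seq_of_isGδ {Y : Type*} [TopologicalSpace Y] {s : Set Y} (h : IsGδ s) :
    ∃ W : ℕ → Set Y, (∀ n, IsOpen (W n)) ∧ s = ⋂ n, W n := by
  obtain ⟨T, hTo, hTc, rfl⟩ := h
  rcases T.eq_empty_or_nonempty with rfl | hne
  · exact ⟨fun _ => univ, fun _ => isOpen_univ, by simp⟩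
  · obtain ⟨f, rfl⟩ := hTc.exists_eq_range hne
    refine ⟨f, fun n => hTo _ ⟨n, rfl⟩, ?_⟩
    rw [sInter_range]

/-- From perfectness of the hyperspace we get a `Gδ`-diagonal for `X`. -/
lemma exists_gdelta_diagonal [T3Space X]
    (hperf : ∀ C : Set (CL X), IsClosed C → IsGδ C) :
    ∃ W : ℕ → Set (X × X), (∀ n, IsOpen (W n)) ∧ (⋂ n, W n) = Set.diagonal X := by
  have hGδ := hperf _ (isClosed_subsingletons (X := X))
  obtain ⟨W, hWo, hWe⟩ := exists_seq_of_isGδ hGδ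
  refine ⟨fun n => pairCL ⁻¹' (W n), fun n => (hWo n).preimage continuous_pairCL, ?_⟩
  ext p
  simp only [mem_iInter, mem_preimage, Set.mem_diagonal_iff]
  constructor
  · intro h
    have : pairCL p ∈ {K : CL X | K.1.Subsingleton} := by
      rw [hWe]; exact mem_iInter.mpr h
    exact this (show p.1 ∈ ({p.1, p.2} : Set X) by simp) (show p.2 ∈ ({p.1, p.2} : Set X) by simp)
  · intro h n
    have : pairCL p ∈ {K : CL X | K.1.Subsingleton} := by
      simp only [mem_setOf_eq, pairCL]
      show ({p.1, p.2} : Set X).Subsingleton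
      rw [← h]
      simp
    rw [hWe] at this
    exact mem_iInter.mp this n




def star (W : ℕ → Set (X × X)) (x : X) (n : ℕ) : Set X :=
  ⋃₀ {G | IsOpen G ∧ G ×ˢ G ⊆ W n ∧ x ∈ G}

lemma isOpen_star (W : ℕ → Set (X × X)) (x : X) (n : ℕ) : IsOpen (star W x n) :=
  isOpen_sUnion fun _ h => h.1

variable {W : ℕ → Set (X × X)}

lemma exists_basic_nhd (hWo : ∀ n, IsOpen (W n)) (hWd : (⋂ n, W n) = Set.diagonal X)
    (z : X) (n : ℕ) :
    ∃ G : Set X, IsOpen G ∧ G ×ˢ G ⊆ W n ∧ z ∈ G := by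
  have hz : (z, z) ∈ W n := by
    have : (z, z) ∈ ⋂ n, W n := hWd ▸ (rfl : z = z)
    exact mem_iInter.mp this n
  obtain ⟨u, v, hu, hv, hzu, hzv, huv⟩ := isOpen_prod_iff.mp (hWo n) z z hz
  refine ⟨u ∩ v, hu.inter hv, ?_, hzu, hzv⟩
  rintro ⟨a, b⟩ ⟨⟨hau, -⟩, ⟨-, hbv⟩⟩
  exact huv ⟨hau, hbv⟩

lemma mem_star_self (hWo : ∀ n, IsOpen (W n)) (hWd : (⋂ n, W n) = Set.diagonal X)
    (x : X) (n : ℕ) : x ∈ star W x n := by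
  obtain ⟨G, hGo, hGW, hxG⟩ := exists_basic_nhd hWo hWd x n
  exact ⟨G, ⟨hGo, hGW, hxG⟩, hxG⟩

lemma eq_of_forall_mem_star (hWd : (⋂ n, W n) = Set.diagonal X) {x y : X}
    (h : ∀ n, y ∈ star W x n) : x = y := by
  have : (x, y) ∈ ⋂ n, W n := mem_iInter.mpr fun n => by
    obtain ⟨G, ⟨hGo, hGW, hxG⟩, hyG⟩ := h n
    exact hGW ⟨hxG, hyG⟩
  rw [hWd] at this
  exact this

lemma finset_subset_chain_member {β : Type*} {c : Set (Set β)} (hc : IsChain (· ⊆ ·) c)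
    (hne : c.Nonempty) (t : Finset β) (ht : ↑t ⊆ ⋃₀ c) : ∃ B ∈ c, ↑t ⊆ B := by
  classical
  induction t using Finset.induction_on with
  | empty => exact hne.imp fun B hB => ⟨hB, by simp⟩
  | @insert x t hx ih =>
    have hts : ↑t ⊆ ⋃₀ c := by
      refine subset_trans ?_ ht
      simp only [Finset.coe_insert]
      exact subset_insert _ _
    obtain ⟨B₂, hB₂, htB₂⟩ := ih hts
    have hxc : x ∈ ⋃₀ c := ht (by simp)
    obtain ⟨B₁, hB₁, hxB₁⟩ := hxc
    rcases eq_or_ne B₁ B₂ with rfl | hne'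
    · exact ⟨B₁, hB₁, by simp only [Finset.coe_insert]; exact insert_subset hxB₁ htB₂⟩
    rcases hc hB₁ hB₂ hne' with h12 | h21
    · exact ⟨B₂, hB₂, by simp only [Finset.coe_insert]; exact insert_subset (h12 hxB₁) htB₂⟩
    · exact ⟨B₁, hB₁, by
        simp only [Finset.coe_insert]
        exact insert_subset hxB₁ (htB₂.trans h21)⟩

lemma exists_acc_point
    (hcc : ∀ U : ℕ → Set X, (∀ n, IsOpen (U n)) → (⋃ n, U n) = Set.univ →
      ∃ t : Finset ℕ, (⋃ n ∈ t, U n) = Set.univ)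
    {s : Set X} (hs : s.Infinite) :
    ∃ z : X, ∀ G : Set X, IsOpen G → z ∈ G →
      ∃ a ∈ s ∩ G, ∃ b ∈ s ∩ G, a ≠ b := by
  classical
  let g := hs.natEmbedding
  set T : ℕ → Set X := fun n => {y | ∃ k, n ≤ k ∧ (g k : X) = y} with hT
  have hz : (⋂ n, closure (T n)).Nonempty := by
    by_contra h
    rw [not_nonempty_iff_eq_empty] at h
    have hUnion : (⋃ n, (closure (T n))ᶜ) = univ := by
      ext y
      simp only [mem_iUnion, mem_compl_iff, mem_univ, iff_true]
      by_contra hy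
      push_neg at hy
      have : y ∈ ⋂ n, closure (T n) := mem_iInter.mpr hy
      rw [h] at this
      exact this
    obtain ⟨t, ht⟩ := hcc (fun n => (closure (T n))ᶜ)
      (fun n => isClosed_closure.isOpen_compl) hUnion
    have hmem : (g (t.sup id) : X) ∈ ⋃ n ∈ t, (closure (T n))ᶜ := by
      rw [ht]; exact mem_univ _
    obtain ⟨n, hnt, hn⟩ := mem_iUnion₂.mp hmem
    exact hn (subset_closure ⟨t.sup id, Finset.le_sup (f := id) hnt, rfl⟩)
  obtain ⟨z, hz⟩ := hz
  refine ⟨z, fun G hGo hzG => ?_⟩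
  obtain ⟨a, haG, k₁, -, hk₁⟩ :=
    mem_closure_iff.mp (mem_iInter.mp hz 0) G hGo hzG
  obtain ⟨b, hbG, k₂, hk₂le, hk₂⟩ :=
    mem_closure_iff.mp (mem_iInter.mp hz (k₁ + 1)) G hGo hzG
  refine ⟨a, ⟨?_, haG⟩, b, ⟨?_, hbG⟩, ?_⟩
  · rw [← hk₁]; exact (g k₁).2
  · rw [← hk₂]; exact (g k₂).2
  · rw [← hk₁, ← hk₂]
    intro hab
    have : k₁ = k₂ := g.injective (Subtype.coe_injective hab)
    omega

theorem compactSpace_of_gdelta_diagonal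
    (hWo : ∀ n, IsOpen (W n)) (hWd : (⋂ n, W n) = Set.diagonal X)
    (hcc : ∀ U : ℕ → Set X, (∀ n, IsOpen (U n)) → (⋃ n, U n) = Set.univ →
      ∃ t : Finset ℕ, (⋃ n ∈ t, U n) = Set.univ) :
    CompactSpace X := by
  classical
  constructor
  rw [isCompact_iff_finite_subcover]
  intro ι U hUo hUcov
  by_contra hbad
  push_neg at hbad
  -- The collection of "good" families.
  set SS : Set (Set (X × ℕ)) :=
    {A | (∀ p ∈ A, ∀ q ∈ A, p ≠ q → p.1 ∉ star W q.1 q.2 ∨ q.1 ∉ star W p.1 p.2) ∧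
      ∀ (s : Finset ι) (t : Finset (X × ℕ)), ↑t ⊆ A →
        ((⋃ i ∈ s, U i) ∪ ⋃ p ∈ t, star W p.1 p.2) ≠ univ} with hSS
  have hempty : (∅ : Set (X × ℕ)) ∈ SS := by
    constructor
    · rintro p hp; exact absurd hp (notMem_empty p)
    · intro s t ht h
      have : t = ∅ := Finset.coe_eq_empty.mp (subset_empty_iff.mp ht)
      subst this
      simp only [Finset.notMem_empty, iUnion_of_empty, iUnion_empty, union_empty] at h
      exact hbad s (h ▸ subset_rfl)
  have hchainub : ∀ c ⊆ SS, IsChain (· ⊆ ·) c → c.Nonempty →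
      ∃ ub ∈ SS, ∀ s ∈ c, s ⊆ ub := by
    intro c hcS hchain hcne
    refine ⟨⋃₀ c, ⟨?_, ?_⟩, fun s hs => subset_sUnion_of_mem hs⟩
    · rintro p ⟨A₁, hA₁, hp⟩ q ⟨A₂, hA₂, hq⟩ hpq
      rcases eq_or_ne A₁ A₂ with rfl | hne'
      · exact (hcS hA₁).1 p hp q hq hpq
      rcases hchain hA₁ hA₂ hne' with h12 | h21
      · exact (hcS hA₂).1 p (h12 hp) q hq hpq
      · exact (hcS hA₁).1 p hp q (h21 hq) hpq
    · intro s t ht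
      obtain ⟨B, hBc, htB⟩ := finset_subset_chain_member hchain hcne t ht
      exact (hcS hBc).2 s t htB
  obtain ⟨M, -, hM⟩ := zorn_subset_nonempty SS hchainub ∅ hempty
  have hMgood : M ∈ SS := hM.1
  by_cases hMc : M.Countable
  · -- countable case: extend M, contradicting maximality
    have hXne : (univ : Set X).Nonempty := by
      by_contra h
      rw [not_nonempty_iff_eq_empty] at h
      exact hbad ∅ (by rw [h]; exact empty_subset _)
    have hR : ∃ x : X, ∀ p ∈ M, x ∉ star W p.1 p.2 := by
      by_contra h
      push_neg at h
      have hMne : M.Nonempty := by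
        obtain ⟨x, -⟩ := hXne
        obtain ⟨p, hp, -⟩ := h x
        exact ⟨p, hp⟩
      obtain ⟨e, he⟩ := hMc.exists_eq_range hMne
      have hcov : (⋃ n, star W (e n).1 (e n).2) = univ := by
        rw [eq_univ_iff_forall]
        intro z
        obtain ⟨p, hpM, hzp⟩ := h z
        rw [he] at hpM
        obtain ⟨n, rfl⟩ := hpM
        exact mem_iUnion.mpr ⟨n, hzp⟩
      obtain ⟨t, htu⟩ := hcc (fun n => star W (e n).1 (e n).2)
        (fun n => isOpen_star W _ _) hcov
      refine hMgood.2 ∅ (t.image e) ?_ ?_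
      · intro p hp
        simp only [Finset.coe_image, mem_image, Finset.mem_coe] at hp
        obtain ⟨n, -, rfl⟩ := hp
        rw [he]; exact mem_range_self n
      · rw [eq_univ_iff_forall]
        intro z
        have : z ∈ ⋃ n ∈ t, star W (e n).1 (e n).2 := htu ▸ mem_univ z
        obtain ⟨n, hnt, hzn⟩ := mem_iUnion₂.mp this
        refine Or.inr (mem_iUnion₂.mpr ⟨e n, Finset.mem_image_of_mem e hnt, hzn⟩)
    obtain ⟨x, hRx⟩ := hR
    obtain ⟨i₀, hi₀⟩ := mem_iUnion.mp (hUcov (mem_univ x))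
    have hxnM : ∀ n : ℕ, ((x, n) : X × ℕ) ∉ M := by
      intro n hmem
      exact hRx (x, n) hmem (mem_star_self hWo hWd x n)
    have hfail : ∀ n : ℕ, ∃ (s : Finset ι) (t : Finset (X × ℕ)),
        ↑t ⊆ insert ((x, n) : X × ℕ) M ∧
        ((⋃ i ∈ s, U i) ∪ ⋃ p ∈ t, star W p.1 p.2) = univ := by
      intro n
      have hnotgood : insert ((x, n) : X × ℕ) M ∉ SS := by
        intro hg
        exact hxnM n (hM.2 hg (subset_insert _ _) (mem_insert _ _))
      have hpw : ∀ p ∈ insert ((x, n) : X × ℕ) M, ∀ q ∈ insert ((x, n) : X × ℕ) M,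
          p ≠ q → p.1 ∉ star W q.1 q.2 ∨ q.1 ∉ star W p.1 p.2 := by
        rintro p hp q hq hpq
        rcases hp with rfl | hpM
        · rcases hq with rfl | hqM
          · exact absurd rfl hpq
          · exact Or.inl (hRx q hqM)
        · rcases hq with rfl | hqM
          · exact Or.inr (hRx p hpM)
          · exact hMgood.1 p hpM q hqM hpq
      rw [hSS, mem_setOf_eq, not_and] at hnotgood
      have := hnotgood hpw
      push_neg at this
      obtain ⟨s, t, ht, hu⟩ := this
      exact ⟨s, t, ht, hu⟩
    choose sF tF htF huF using hfail
    set O : ℕ → Set X := fun n =>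
      (⋃ i ∈ sF n, U i) ∪ ⋃ p ∈ (tF n).erase (x, n), star W p.1 p.2 with hO
    have hOopen : ∀ n, IsOpen (O n) := by
      intro n
      refine IsOpen.union ?_ ?_
      · exact isOpen_biUnion fun i _ => hUo i
      · exact isOpen_biUnion fun p _ => isOpen_star W _ _
    have hkey : ∀ (n : ℕ) (z : X), z ∉ star W x n → z ∈ O n := by
      intro n z hz
      have hx_t : ((x, n) : X × ℕ) ∈ tF n := by
        by_contra hxt
        have hsub : ↑(tF n) ⊆ M := by
          intro p hp
          rcases htF n hp with h | h
          · exact absurd (h ▸ hp) (by simpa [h] using hxt)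
          · exact h
        exact hMgood.2 (sF n) (tF n) hsub (huF n)
      have hsplit : (⋃ p ∈ tF n, star W p.1 p.2) =
          star W x n ∪ ⋃ p ∈ (tF n).erase (x, n), star W p.1 p.2 := by
        conv_lhs => rw [← Finset.insert_erase hx_t]
        rw [Finset.set_biUnion_insert]
      have hz' : z ∈ (⋃ i ∈ sF n, U i) ∪ ⋃ p ∈ tF n, star W p.1 p.2 := by
        rw [huF n]; exact mem_univ z
      rw [hsplit] at hz'
      rcases hz' with h | h
      · exact Or.inl h
      · rcases h with h | h
        · exact absurd h hz
        · exact Or.inr h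
    set V : ℕ → Set X := fun m => Nat.casesOn m (U i₀) O with hV
    have hVopen : ∀ m, IsOpen (V m) := by
      intro m
      cases m with
      | zero => exact hUo i₀
      | succ n => exact hOopen n
    have hVcov : (⋃ m, V m) = univ := by
      rw [eq_univ_iff_forall]
      intro z
      by_cases hz : ∀ n, z ∈ star W x n
      · have : x = z := eq_of_forall_mem_star hWd hz
        exact mem_iUnion.mpr ⟨0, this ▸ hi₀⟩
      · push_neg at hz
        obtain ⟨n, hn⟩ := hz
        exact mem_iUnion.mpr ⟨n + 1, hkey n z hn⟩
    obtain ⟨t'', ht''⟩ := hcc V hVopen hVcov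
    set Sstar : Finset ι :=
      insert i₀ (t''.biUnion fun m => Nat.casesOn m ∅ sF) with hSstar
    set Tstar : Finset (X × ℕ) :=
      t''.biUnion (fun m => Nat.casesOn m ∅ (fun n => (tF n).erase (x, n))) with hTstar
    have hTM : ↑Tstar ⊆ M := by
      intro p hp
      rw [hTstar] at hp
      simp only [Finset.coe_biUnion, mem_iUnion, Finset.mem_coe] at hp
      obtain ⟨m, -, hpm⟩ := hp
      cases m with
      | zero => exact absurd hpm (Finset.notMem_empty p)
      | succ n =>
        have hpt : p ∈ tF n := Finset.mem_of_mem_erase hpm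
        have hpe : p ≠ (x, n) := Finset.ne_of_mem_erase hpm
        rcases htF n hpt with h | h
        · exact absurd h hpe
        · exact h
    refine hMgood.2 Sstar Tstar hTM ?_
    rw [eq_univ_iff_forall]
    intro z
    have : z ∈ ⋃ m ∈ t'', V m := ht'' ▸ mem_univ z
    obtain ⟨m, hmt, hzm⟩ := mem_iUnion₂.mp this
    cases m with
    | zero =>
      refine Or.inl (mem_iUnion₂.mpr ⟨i₀, Finset.mem_insert_self _ _, hzm⟩)
    | succ n =>
      rcases hzm with h | h
      · obtain ⟨i, hi, hzi⟩ := mem_iUnion₂.mp h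
        refine Or.inl (mem_iUnion₂.mpr ⟨i, ?_, hzi⟩)
        refine Finset.mem_insert_of_mem (Finset.mem_biUnion.mpr ⟨n + 1, hmt, hi⟩)
      · obtain ⟨p, hp, hzp⟩ := mem_iUnion₂.mp h
        refine Or.inr (mem_iUnion₂.mpr ⟨p, ?_, hzp⟩)
        exact Finset.mem_biUnion.mpr ⟨n + 1, hmt, hp⟩
  · -- uncountable case
    have hex : ∃ n : ℕ, {y : X | ((y, n) : X × ℕ) ∈ M}.Infinite := by
      by_contra h
      push_neg at h
      apply hMc
      have hsub : M ⊆ ⋃ n : ℕ, (fun y => ((y, n) : X × ℕ)) '' {y | ((y, n) : X × ℕ) ∈ M} := by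
        rintro ⟨a, n⟩ hp
        exact mem_iUnion.mpr ⟨n, ⟨a, hp, rfl⟩⟩
      exact (Set.countable_iUnion fun n => ((h n).countable).image _).mono hsub
    obtain ⟨n₀, hinf⟩ := hex
    obtain ⟨z, hzacc⟩ := exists_acc_point hcc hinf
    obtain ⟨G, hGo, hGW, hzG⟩ := exists_basic_nhd hWo hWd z n₀
    obtain ⟨a, ⟨haF, haG⟩, b, ⟨hbF, hbG⟩, hab⟩ := hzacc G hGo hzG
    have hpq : ((a, n₀) : X × ℕ) ≠ (b, n₀) := by
      simp only [ne_eq, Prod.mk.injEq, and_true]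
      exact hab
    rcases hMgood.1 (a, n₀) haF (b, n₀) hbF hpq with h | h
    · exact h ⟨G, ⟨hGo, hGW, hbG⟩, haG⟩
    · exact h ⟨G, ⟨hGo, hGW, haG⟩, hbG⟩




theorem metrizable_of_compact [T3Space X] [CompactSpace X]
    (hWo : ∀ n, IsOpen (W n)) (hWd : (⋂ n, W n) = Set.diagonal X) :
    MetrizableSpace X := by
  have hdsub : ∀ n, Set.diagonal X ⊆ W n := fun n => by
    rw [← hWd]; exact iInter_subset _ n
  have key : ∀ O : Set (X × X), IsOpen O → Set.diagonal X ⊆ O →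
      ∃ V, IsOpen V ∧ Set.diagonal X ⊆ V ∧ closure V ⊆ O := fun O hO h =>
    normal_exists_closure_subset isClosed_diagonal hO h
  choose f hfo hfd hfc using key
  let g : ℕ → {V : Set (X × X) // IsOpen V ∧ Set.diagonal X ⊆ V} := fun n =>
    Nat.rec ⟨f (W 0) (hWo 0) (hdsub 0), hfo _ _ _, hfd _ _ _⟩
      (fun n p => ⟨f (p.1 ∩ W (n + 1)) (p.2.1.inter (hWo (n + 1)))
        (subset_inter p.2.2 (hdsub (n + 1))), hfo _ _ _, hfd _ _ _⟩) n
  set V : ℕ → Set (X × X) := fun n => (g n).1 with hVdef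
  have hVo : ∀ n, IsOpen (V n) := fun n => (g n).2.1
  have hVd : ∀ n, Set.diagonal X ⊆ V n := fun n => (g n).2.2
  have hVW : ∀ n, closure (V n) ⊆ W n := by
    intro n
    cases n with
    | zero => exact hfc _ _ _
    | succ n => exact (hfc _ _ _).trans inter_subset_right
  have hVnest : ∀ n, closure (V (n + 1)) ⊆ V n := fun n =>
    (hfc _ _ _).trans inter_subset_left
  have hanti : Antitone fun n => closure (V n) := by
    apply antitone_nat_of_succ_le
    intro n
    exact (hVnest n).trans subset_closure
  have hVdiag : (⋂ n, closure (V n)) = Set.diagonal X := by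
    apply subset_antisymm
    · intro p hp
      rw [← hWd]
      exact mem_iInter.mpr fun n => hVW n (mem_iInter.mp hp n)
    · intro p hp
      exact mem_iInter.mpr fun n => subset_closure (hVd n hp)
  have hbasis : (𝓝ˢ (Set.diagonal X)).HasBasis (fun _ : ℕ => True) V := by
    rw [Filter.hasBasis_iff]
    intro s
    constructor
    · intro hs
      obtain ⟨O, hOo, hdO, hOs⟩ := mem_nhdsSet_iff_exists.mp hs
      have hK : IsCompact Oᶜ := hOo.isClosed_compl.isCompact
      have hKsub : Oᶜ ⊆ ⋃ n, (closure (V n))ᶜ := by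
        intro p hp
        have hpd : p ∉ Set.diagonal X := fun h => hp (hdO h)
        rw [← hVdiag] at hpd
        obtain ⟨n, hn⟩ := not_forall.mp (fun h => hpd (mem_iInter.mpr h))
        exact mem_iUnion.mpr ⟨n, hn⟩
      obtain ⟨t, hts⟩ := hK.elim_finite_subcover (fun n => (closure (V n))ᶜ)
        (fun n => isClosed_closure.isOpen_compl) hKsub
      rcases t.eq_empty_or_nonempty with rfl | htne
      · refine ⟨0, trivial, ?_⟩
        have : Oᶜ ⊆ ∅ := by simpa using hts
        have hO : O = univ := by
          rw [← compl_empty_iff]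
          exact subset_empty_iff.mp this
        exact (subset_univ _).trans (hO ▸ hOs)
      · set N := t.max' htne with hN
        refine ⟨N, trivial, ?_⟩
        have hsub : Oᶜ ⊆ (closure (V N))ᶜ := by
          refine hts.trans ?_
          refine iUnion₂_subset fun n hn => ?_
          exact compl_subset_compl.mpr (hanti (t.le_max' n hn))
        have : closure (V N) ⊆ O := by
          rw [← compl_subset_compl]
          exact hsub
        exact (subset_closure.trans this).trans hOs
    · rintro ⟨n, -, hVs⟩
      exact mem_of_superset (mem_nhdsSet_iff_exists.mpr ⟨V n, hVo n, hVd n, subset_rfl⟩) hVs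
  have hcg : (𝓝ˢ (Set.diagonal X)).IsCountablyGenerated := hbasis.isCountablyGenerated
  letI u : UniformSpace X := uniformSpaceOfCompactR1
  haveI : (uniformity X).IsCountablyGenerated := hcg
  exact UniformSpace.metrizableSpace

end CLProof

/-- If `X` is a `T₃` space which is countably compact and whose Vietoris
hyperspace is perfect (every closed set is a `Gδ`), then `X` is compact and
metrizable. -/
theorem compact_metrizable_of_perfect_hyperspace {X : Type*} [TopologicalSpace X]
    [T3Space X] (hperf : ∀ C : Set (CL X), IsClosed C → IsGδ C)
    (hcc : ∀ U : ℕ → Set X, (∀ n, IsOpen (U n)) → (⋃ n, U n) = Set.univ →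
      ∃ t : Finset ℕ, (⋃ n ∈ t, U n) = Set.univ) :
    CompactSpace X ∧ TopologicalSpace.MetrizableSpace X := by
  obtain ⟨W, hWo, hWd⟩ := CLProof.exists_gdelta_diagonal hperf
  have hcomp : CompactSpace X := CLProof.compactSpace_of_gdelta_diagonal hWo hWd hcc
  exact ⟨hcomp, CLProof.metrizable_of_compact hWo hWd⟩
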